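/- Let f(A) = (1/2)‖(Z − A Πᵀ) ⊙ Δ‖_F² + (μ/2)·trace(Aᵀ R⁻¹ A) where R is symmetric positive definite with largest eigenvalue of R⁻¹ equal to λ, and let g(A, Ā) = (1/2)‖(Z − A Πᵀ) ⊙ Δ‖_F² + μ·((λ/2)·trace(Aᵀ A) − trace(Θᵀ A) + (1/2)·trace(Θᵀ Ā)) with Θ = (λ I − R⁻¹) Ā. Then: (i) f(Ā) = g(Ā, Ā); (ii) the gradients of f and g(·, Ā) coincide at A = Ā; (iii) f(A) ≤ g(A, Ā) for all A. -/

import Mathlib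

open Matrix

attribute [local instance] Matrix.normedAddCommGroup Matrix.normedSpace

theorem aux_trace_nonneg {n : ℕ} {P : Matrix (Fin n) (Fin n) ℝ} (hP : P.PosSemidef) :
    0 ≤ P.trace := by
  rw [Matrix.trace]
  exact Finset.sum_nonneg fun i _ => hP.diag_nonneg

theorem aux_psd {n : ℕ} (A : Matrix (Fin n) (Fin n) ℝ) (hA : A.IsHermitian) (lam : ℝ)
    (hl : ∀ i, hA.eigenvalues i ≤ lam) :
    (lam • (1 : Matrix (Fin n) (Fin n) ℝ) - A).PosSemidef := by
  set U : Matrix (Fin n) (Fin n) ℝ := (hA.eigenvectorUnitary : Matrix (Fin n) (Fin n) ℝ) with hUdef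
  have h1 : U * Uᴴ = 1 := by
    rw [← Matrix.star_eq_conjTranspose]
    exact (Matrix.mem_unitaryGroup_iff).mp hA.eigenvectorUnitary.2
  have hdiag : diagonal (fun i => lam - hA.eigenvalues i)
      = lam • (1 : Matrix (Fin n) (Fin n) ℝ) - diagonal (RCLike.ofReal ∘ hA.eigenvalues) := by
    ext i j
    by_cases h : i = j <;> simp [diagonal, h, Matrix.one_apply, Matrix.smul_apply]
  have key : lam • (1 : Matrix (Fin n) (Fin n) ℝ) - A
      = U * (diagonal (fun i => lam - hA.eigenvalues i)) * Uᴴ := by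
    have hU := hA.spectral_theorem
    rw [Unitary.conjStarAlgAut_apply, Matrix.star_eq_conjTranspose] at hU
    calc lam • (1 : Matrix (Fin n) (Fin n) ℝ) - A
        = lam • (U * Uᴴ) - U * diagonal (RCLike.ofReal ∘ hA.eigenvalues) * Uᴴ := by
          rw [h1, ← hU]
      _ = U * (diagonal (fun i => lam - hA.eigenvalues i)) * Uᴴ := by
          rw [hdiag, Matrix.mul_sub, Matrix.sub_mul, Matrix.mul_smul, Matrix.mul_one,
            Matrix.smul_mul]
  rw [key]
  exact (Matrix.PosSemidef.diagonal
    (fun i => by simpa using sub_nonneg.mpr (hl i))).mul_mul_conjTranspose_same U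


/-- BSUM majorization for the Gaussian case: with
`f(A) = (1/2)‖(Z − AΠᵀ) ⊙ Δ‖_F² + (μ/2) tr(Aᵀ R⁻¹ A)` and
`g(A, Ā) = (1/2)‖(Z − AΠᵀ) ⊙ Δ‖_F² + μ((λ/2) tr(AᵀA) − tr(ΘᵀA) + (1/2) tr(ΘᵀĀ))`,
where `Θ = (λI − R⁻¹)Ā` and `λ` is the largest eigenvalue of `R⁻¹`, one has
(i) `f(Ā) = g(Ā, Ā)`; (ii) the derivatives of `f` and `g(·, Ā)` coincide at `Ā`;
(iii) `f(A) ≤ g(A, Ā)` for all `A`. -/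
theorem bsum_majorization_gaussian (M K R : ℕ) (μ lam : ℝ) (hμ : 0 < μ)
    (Z Δ : Matrix (Fin M) (Fin K) ℝ) (Pmat : Matrix (Fin K) (Fin R) ℝ)
    (Rm : Matrix (Fin M) (Fin M) ℝ) (hRm : Rm.PosDef)
    (hH : (Rm⁻¹).IsHermitian)
    (hlam : IsGreatest (Set.range hH.eigenvalues) lam)
    (Abar : Matrix (Fin M) (Fin R) ℝ)
    (f g : Matrix (Fin M) (Fin R) ℝ → ℝ)
    (hf : ∀ A, f A = (1 / 2) * (∑ i, ∑ j, ((Z i j - (A * Pmatᵀ) i j) * Δ i j) ^ 2)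
        + (μ / 2) * (Aᵀ * Rm⁻¹ * A).trace)
    (hg : ∀ A, g A = (1 / 2) * (∑ i, ∑ j, ((Z i j - (A * Pmatᵀ) i j) * Δ i j) ^ 2)
        + μ * ((lam / 2) * (Aᵀ * A).trace
            - (((lam • (1 : Matrix (Fin M) (Fin M) ℝ) - Rm⁻¹) * Abar)ᵀ * A).trace
            + (1 / 2) * (((lam • (1 : Matrix (Fin M) (Fin M) ℝ) - Rm⁻¹) * Abar)ᵀ * Abar).trace)) :
    f Abar = g Abar ∧
    fderiv ℝ f Abar = fderiv ℝ g Abar ∧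
    ∀ A, f A ≤ g A := by
  set Bm : Matrix (Fin M) (Fin M) ℝ := lam • (1 : Matrix (Fin M) (Fin M) ℝ) - Rm⁻¹ with hBdef
  have hBsymm : Bmᵀ = Bm := by
    have : (Rm⁻¹)ᵀ = Rm⁻¹ := hH
    simp [hBdef, Matrix.transpose_sub, Matrix.transpose_smul, this]
  set h : Matrix (Fin M) (Fin R) ℝ → ℝ :=
    fun A => (μ / 2) * ((A - Abar)ᵀ * Bm * (A - Abar)).trace with hhdef
  -- key algebraic identity
  have hkey : ∀ A, g A = f A + h A := by
    intro A
    have hA : h A = (μ / 2) * ((A - Abar)ᵀ * Bm * (A - Abar)).trace := rfl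
    rw [hf, hg, hA]
    have ht : (Aᵀ * Bm * Abar).trace = (Abarᵀ * Bm * A).trace := by
      rw [← Matrix.trace_transpose (Aᵀ * Bm * Abar)]
      simp [Matrix.transpose_mul, hBsymm, Matrix.mul_assoc]
    have e2 : (Aᵀ * Bm * A).trace = lam * (Aᵀ * A).trace - (Aᵀ * Rm⁻¹ * A).trace := by
      simp [hBdef, Matrix.mul_sub, Matrix.sub_mul, Matrix.mul_smul, Matrix.smul_mul,
        Matrix.trace_sub, Matrix.trace_smul, Matrix.mul_one, smul_eq_mul]
    have e3 : (Bm * Abar)ᵀ = Abarᵀ * Bm := by rw [Matrix.transpose_mul, hBsymm]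
    have e1 : ((A - Abar)ᵀ * Bm * (A - Abar)).trace
        = (Aᵀ * Bm * A).trace - 2 * (Abarᵀ * Bm * A).trace + (Abarᵀ * Bm * Abar).trace := by
      simp [Matrix.transpose_sub, Matrix.sub_mul, Matrix.mul_sub, Matrix.trace_sub, ht]
      ring
    rw [e3, e1, e2]
    ring
  have hRinv : (Rm⁻¹)ᴴ = (Rm⁻¹)ᵀ := by ext i j; simp [Matrix.conjTranspose_apply]
  have hBpsd : Bm.PosSemidef := by
    apply aux_psd _ hH lam
    intro i
    exact hlam.2 ⟨i, rfl⟩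
  have hconjT : ∀ A : Matrix (Fin M) (Fin R) ℝ, Aᴴ = Aᵀ := by
    intro A; ext i j; simp [Matrix.conjTranspose_apply]
  have hhnonneg : ∀ A, 0 ≤ h A := by
    intro A
    have := hBpsd.conjTranspose_mul_mul_same (A - Abar)
    rw [hconjT] at this
    exact mul_nonneg (by linarith) (aux_trace_nonneg this)
  refine ⟨?_, ?_, ?_⟩
  · rw [hkey, hhdef]
    simp
  · -- fderiv part
    -- bilinear map
    let E := Matrix (Fin M) (Fin R) ℝ
    let bilin : E →ₗ[ℝ] E →ₗ[ℝ] ℝ := LinearMap.mk₂ ℝ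
      (fun X Y => (μ / 2) * (Xᵀ * Bm * Y).trace)
      (fun X X' Y => by
        beta_reduce; rw [Matrix.transpose_add, Matrix.add_mul, Matrix.add_mul, Matrix.trace_add]; ring)
      (fun c X Y => by
        beta_reduce; rw [Matrix.transpose_smul, Matrix.smul_mul, Matrix.smul_mul, Matrix.trace_smul]; simp only [smul_eq_mul]; ring)
      (fun X Y Y' => by
        beta_reduce; rw [Matrix.mul_add, Matrix.trace_add]; ring)
      (fun c X Y => by
        beta_reduce; rw [Matrix.mul_smul, Matrix.trace_smul]; simp only [smul_eq_mul]; ring)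
    let φ : E →ₗ[ℝ] (E →L[ℝ] ℝ) :=
      { toFun := fun X => LinearMap.toContinuousLinearMap (bilin X)
        map_add' := fun X X' => by ext Y; simp
        map_smul' := fun c X => by ext Y; simp }
    let Φ : E →L[ℝ] (E →L[ℝ] ℝ) := LinearMap.toContinuousLinearMap φ
    have bb : IsBoundedBilinearMap ℝ (fun p : E × E => Φ p.1 p.2) :=
      Φ.isBoundedBilinearMap
    have hd : HasFDerivAt (fun A : E => (A - Abar, A - Abar))
        ((ContinuousLinearMap.id ℝ E).prod (ContinuousLinearMap.id ℝ E)) Abar :=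
      ((hasFDerivAt_id Abar).sub_const Abar).prodMk ((hasFDerivAt_id Abar).sub_const Abar)
    have hb := (bb.hasFDerivAt (Abar - Abar, Abar - Abar)).comp Abar hd
    have hzero : (bb.deriv (Abar - Abar, Abar - Abar)).comp
        ((ContinuousLinearMap.id ℝ E).prod (ContinuousLinearMap.id ℝ E)) = 0 := by
      ext X
      show bb.deriv (Abar - Abar, Abar - Abar) (X, X) = 0
      rw [IsBoundedBilinearMap.deriv_apply]
      simp
    replace hb := hb.congr_fderiv hzero
    have hh : HasFDerivAt h 0 Abar := hb
    have hgfun : g = fun A => f A + h A := funext hkey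
    by_cases hdiff : DifferentiableAt ℝ f Abar
    · rw [hgfun]
      exact ((hdiff.hasFDerivAt.add hh).fderiv.trans (add_zero _)).symm
    · have hgnd : ¬ DifferentiableAt ℝ g Abar := by
        intro hgd
        apply hdiff
        have hffun : f = fun A => g A - h A := by
          funext A; rw [hkey]; ring
        rw [hffun]
        exact hgd.sub hh.differentiableAt
      rw [fderiv_zero_of_not_differentiableAt hdiff,
        fderiv_zero_of_not_differentiableAt hgnd]
  · intro A
    rw [hkey]
    linarith [hhnonneg A]
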